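/- Let n ≥ 1 and let a₀, a₁, a₂ ∈ ℤ[X_{n-1}]. If the periodic continued fraction [a₀, a₁, a₂, a₁, a₂, …] (i.e. the sequence c with c₀ = a₀, c_{2k+1} = a₁ and c_{2k+2} = a₂ for all k ≥ 0) converges to X_n, then a₂ = 2·a₀, (a₀·a₁ + 1)² − X_n²·a₁² = 1, and (a₀·a₁ + 1)·a₁ > 0. (Equivalently, ε = (a₀a₁+1) + X_n·a₁ lies in RE_n⁺ with q(ε) = a₁ dividing p(ε) − 1 = a₀a₁ and sgn(p(ε)q(ε)) = 1.) -/

import Mathlib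

/-- `X n = 2 cos(2π/2^(n+2))`. -/
noncomputable def X (n : ℕ) : ℝ := 2 * Real.cos (2 * Real.pi / 2 ^ (n + 2))

/-- Convergent numerators: `cfNum c (k+1) = p_k`, with `cfNum c 0 = p_{-1} = 1`. -/
noncomputable def cfNum (c : ℕ → ℝ) : ℕ → ℝ
  | 0 => 1
  | 1 => c 0
  | (k + 2) => c (k + 1) * cfNum c (k + 1) + cfNum c k

/-- Convergent denominators: `cfDen c (k+1) = q_k`, with `cfDen c 0 = q_{-1} = 0`. -/
noncomputable def cfDen (c : ℕ → ℝ) : ℕ → ℝ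
  | 0 => 0
  | 1 => 1
  | (k + 2) => c (k + 1) * cfDen c (k + 1) + cfDen c k

/-- The continued fraction `[c₀, c₁, c₂, …]` converges to `x`. -/
def CFConv (c : ℕ → ℝ) (x : ℝ) : Prop :=
  Filter.Tendsto (fun k => cfNum c (k + 1) / cfDen c (k + 1)) Filter.atTop (nhds x)

section Aux1
open Polynomial

/-- auxiliary polynomials -/
noncomputable def FF : ℕ → Polynomial ℤ
  | 0 => Polynomial.X
  | (m+1) => (FF m).comp (Polynomial.X ^ 2 - Polynomial.C 2)

lemma FF_natDegree (m : ℕ) : (FF m).natDegree = 2 ^ m := by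
  induction m with
  | zero => simp [FF]
  | succ m ih =>
      rw [FF, natDegree_comp, ih, natDegree_X_pow_sub_C, pow_succ]

lemma FF_monic (m : ℕ) : (FF m).Monic := by
  induction m with
  | zero => exact monic_X
  | succ m ih =>
      exact ih.comp (monic_X_pow_sub_C 2 (by norm_num)) (by rw [natDegree_X_pow_sub_C]; norm_num)

lemma FF_mod2 (m : ℕ) : (FF m).map (Int.castRingHom (ZMod 2)) = Polynomial.X ^ (2 ^ m) := by
  induction m with
  | zero => simp [FF]
  | succ m ih =>
      rw [FF, map_comp, ih]
      have h2 : ((Polynomial.X ^ 2 - Polynomial.C 2 : Polynomial ℤ).map (Int.castRingHom (ZMod 2)))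
          = Polynomial.X ^ 2 := by
        rw [Polynomial.map_sub, Polynomial.map_pow, Polynomial.map_X, Polynomial.map_C,
          show ((Int.castRingHom (ZMod 2)) 2) = 0 from by decide, Polynomial.C_0, sub_zero]
      rw [h2, pow_comp, X_comp, ← pow_mul]
      congr 1
      rw [pow_succ]; ring

lemma FF_eval_two (m : ℕ) : (FF m).eval 2 = 2 := by
  induction m with
  | zero => simp [FF]
  | succ m ih => rw [FF, eval_comp]; norm_num [ih]

lemma FF_eval_neg_two (m : ℕ) : (FF (m+1)).eval (-2) = 2 := by
  rw [FF, eval_comp]; norm_num [FF_eval_two]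

lemma FF_coeff_zero (m : ℕ) : (FF m).coeff 0 = 2 ∨ (FF m).coeff 0 = -2 ∨ (FF m).coeff 0 = 0 := by
  rw [coeff_zero_eq_eval_zero]
  match m with
  | 0 => simp [FF]
  | 1 => rw [FF, eval_comp]; norm_num [FF]
  | (m+2) =>
      rw [FF, eval_comp]
      norm_num [FF_eval_neg_two]

lemma FF_irred (m : ℕ) : Irreducible ((FF m).map (Int.castRingHom ℚ)) := by
  match m with
  | 0 => simpa [FF] using irreducible_X (R := ℚ)
  | (m+1) =>
      rw [← Polynomial.IsPrimitive.Int.irreducible_iff_irreducible_map_cast (FF_monic (m+1)).isPrimitive]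
      have hprime : (Ideal.span {(2:ℤ)}).IsPrime :=
        (Ideal.span_singleton_prime (by norm_num)).mpr Int.prime_two
      have heis : (FF (m+1)).IsEisensteinAt (Ideal.span {(2:ℤ)}) := by
        constructor
        · rw [(FF_monic (m+1)).leadingCoeff]
          simp [Ideal.mem_span_singleton]
        · intro i hi
          rw [Ideal.mem_span_singleton]
          have := FF_mod2 (m+1)
          have hc : ((FF (m+1)).coeff i : ZMod 2) = 0 := by
            have : ((FF (m+1)).map (Int.castRingHom (ZMod 2))).coeff i = 0 := by
              rw [FF_mod2, coeff_X_pow]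
              rw [FF_natDegree] at hi
              simp [Nat.ne_of_lt hi]
            simpa [coeff_map] using this
          exact_mod_cast (ZMod.intCast_zmod_eq_zero_iff_dvd _ 2).mp hc
        · rw [Ideal.span_singleton_pow, Ideal.mem_span_singleton]
          have h0 : (FF (m+1)).coeff 0 = 2 ∨ (FF (m+1)).coeff 0 = -2 ∨ (FF (m+1)).coeff 0 = 0 :=
            FF_coeff_zero (m+1)
          have hne : (FF (m+1)).coeff 0 ≠ 0 := by
            rw [coeff_zero_eq_eval_zero, FF, eval_comp]
            norm_num
            match m with
            | 0 => norm_num [FF]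
            | (k+1) => rw [FF_eval_neg_two]; norm_num
          rcases h0 with h | h | h <;> simp [h] at hne ⊢ <;> decide
      exact heis.irreducible hprime (FF_monic (m+1)).isPrimitive
        (by rw [FF_natDegree]; positivity)

lemma X_zero : X 0 = 0 := by
  have h : 2 * Real.pi / 2 ^ (0 + 2) = Real.pi / 2 := by ring
  simp only [_root_.X, h, Real.cos_pi_div_two, mul_zero]

lemma X_sq (m : ℕ) : X (m + 1) ^ 2 = 2 + X m := by
  have h : 2 * (2 * Real.pi / 2 ^ (m + 3)) = 2 * Real.pi / 2 ^ (m + 2) := by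
    rw [pow_succ]; ring
  have h2 := Real.cos_two_mul (2 * Real.pi / 2 ^ (m + 3))
  rw [h] at h2
  show (2 * Real.cos (2 * Real.pi / 2 ^ (m + 1 + 2))) ^ 2 = 2 + 2 * Real.cos (2 * Real.pi / 2 ^ (m + 2))
  rw [show m + 1 + 2 = m + 3 from rfl, h2]
  ring

lemma X_pos (m : ℕ) (hm : 1 ≤ m) : 0 < X m := by
  have hpi := Real.pi_pos
  have h8 : (8:ℝ) ≤ 2 ^ (m + 2) := by
    calc (8:ℝ) = 2 ^ 3 := by norm_num
    _ ≤ 2 ^ (m + 2) := by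
        apply pow_le_pow_right₀ (by norm_num)
        omega
  have hlt : 2 * Real.pi / 2 ^ (m + 2) < Real.pi / 2 := by
    rw [div_lt_div_iff₀ (by positivity) (by norm_num)]
    nlinarith
  have hgt : -(Real.pi / 2) < 2 * Real.pi / 2 ^ (m + 2) := by
    have : (0:ℝ) < 2 * Real.pi / 2 ^ (m + 2) := by positivity
    linarith
  have hcos := Real.cos_pos_of_mem_Ioo ⟨hgt, hlt⟩
  show 0 < 2 * Real.cos (2 * Real.pi / 2 ^ (m + 2))
  linarith

lemma aeval_FF (m : ℕ) : (Polynomial.aeval (X m)) (FF m) = 0 := by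
  induction m with
  | zero => simp [FF, X_zero]
  | succ m ih =>
      rw [FF, aeval_comp]
      have : (Polynomial.aeval (X (m+1))) (Polynomial.X ^ 2 - Polynomial.C 2 : Polynomial ℤ) = X m := by
        simp only [map_sub, map_pow, Polynomial.aeval_X, Polynomial.aeval_C, eq_intCast,
          Int.cast_ofNat, map_ofNat]
        rw [X_sq]
        push_cast
        ring
      rw [this, ih]

lemma minpoly_X (m : ℕ) : minpoly ℚ (X m) = (FF m).map (Int.castRingHom ℚ) := by
  refine (minpoly.eq_of_irreducible_of_monic (FF_irred m) ?_ ?_).symm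
  · have : Int.castRingHom ℚ = algebraMap ℤ ℚ := rfl
    rw [this, aeval_map_algebraMap]
    exact aeval_FF m
  · exact (FF_monic m).map _

lemma minpoly_X_natDegree (m : ℕ) : (minpoly ℚ (X m)).natDegree = 2 ^ m := by
  rw [minpoly_X, natDegree_map_eq_of_injective (f := Int.castRingHom ℚ) Int.cast_injective, FF_natDegree]

lemma X_integral (m : ℕ) : IsIntegral ℚ (X m) := by
  refine ⟨(FF m).map (algebraMap ℤ ℚ), (FF_monic m).map _, ?_⟩
  show (Polynomial.aeval (X m)) ((FF m).map (algebraMap ℤ ℚ)) = 0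
  rw [aeval_map_algebraMap]
  exact aeval_FF m

/-- Key irrationality: `X n` is not a ratio of elements of `ℤ[X (n-1)]`. -/
lemma Hirr (n : ℕ) (hn : 1 ≤ n) (b c : ℝ)
    (hb : b ∈ Algebra.adjoin ℤ ({X (n - 1)} : Set ℝ))
    (hc : c ∈ Algebra.adjoin ℤ ({X (n - 1)} : Set ℝ))
    (h : b * X n = c) : b = 0 := by
  by_contra hb0
  set θ := X (n - 1)
  set K := IntermediateField.adjoin ℚ ({θ} : Set ℝ)
  have hθint : IsIntegral ℚ θ := X_integral (n - 1)
  have hmem : ∀ y : ℝ, y ∈ Algebra.adjoin ℤ ({θ} : Set ℝ) → y ∈ K := by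
    intro y hy
    refine Algebra.adjoin_induction ?_ ?_ ?_ ?_ hy
    · intro z hz
      rw [Set.mem_singleton_iff] at hz
      subst hz
      exact IntermediateField.mem_adjoin_simple_self ℚ θ
    · intro r
      exact IntermediateField.intCast_mem K r
    · intro u v _ _ hu hv; exact add_mem hu hv
    · intro u v _ _ hu hv; exact mul_mem hu hv
  have hxK : X n ∈ K := by
    have : X n = c / b := by field_simp; linarith [h]
    rw [this]
    exact div_mem (hmem c hc) (hmem b hb)
  haveI : FiniteDimensional ℚ K := IntermediateField.adjoin.finiteDimensional hθint
  have hrank : Module.finrank ℚ K = 2 ^ (n - 1) := by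
    rw [IntermediateField.adjoin.finrank hθint, minpoly_X_natDegree]
  have hdeg : (minpoly ℚ (⟨X n, hxK⟩ : K)).natDegree ≤ 2 ^ (n - 1) := by
    rw [← hrank]; exact minpoly.natDegree_le _
  have heq : minpoly ℚ (⟨X n, hxK⟩ : K) = minpoly ℚ (X n) := by
    have hval : algebraMap K ℝ (⟨X n, hxK⟩ : K) = X n := rfl
    have h2 := minpoly.algebraMap_eq (A := ℚ) (B := K) (B' := ℝ)
      (algebraMap K ℝ).injective (⟨X n, hxK⟩ : K)
    rw [hval] at h2
    exact h2.symm
  rw [heq, minpoly_X_natDegree] at hdeg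
  have : 2 ^ (n - 1) < 2 ^ n := by
    apply Nat.pow_lt_pow_right (by norm_num)
    omega
  omega

end Aux1

section Aux2
open Filter

/-- Closed form for a two-term linear recurrence with distinct characteristic roots. -/
lemma rec_closed_form (u : ℕ → ℝ) (t lam A B : ℝ)
    (hrec : ∀ j, u (j + 2) = t * u (j + 1) - u j)
    (hchar : lam ^ 2 - t * lam + 1 = 0)
    (h0 : u 0 = A + B) (h1 : u 1 = A * lam + B * (t - lam)) :
    ∀ j, u j = A * lam ^ j + B * (t - lam) ^ j := by
  have hmu : (t - lam) ^ 2 = t * (t - lam) - 1 := by linear_combination hchar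
  have hl : lam ^ 2 = t * lam - 1 := by linear_combination hchar
  have key : ∀ j, u j = A * lam ^ j + B * (t - lam) ^ j ∧
      u (j + 1) = A * lam ^ (j + 1) + B * (t - lam) ^ (j + 1) := by
    intro j
    induction j with
    | zero =>
        refine ⟨by simpa using h0, ?_⟩
        simpa using h1
    | succ j ih =>
        refine ⟨ih.2, ?_⟩
        rw [hrec j, ih.1, ih.2]
        linear_combination (-(A * lam ^ j)) * hl + (-(B * (t - lam) ^ j)) * hmu
  exact fun j => (key j).1

/-- Closed form for the parabolic case `t = 2`. -/
lemma rec_arith (u : ℕ → ℝ) (hrec : ∀ j, u (j + 2) = 2 * u (j + 1) - u j) :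
    ∀ j : ℕ, u j = u 0 + (j : ℝ) * (u 1 - u 0) := by
  have key : ∀ j : ℕ, u j = u 0 + (j : ℝ) * (u 1 - u 0) ∧
      u (j + 1) = u 0 + ((j : ℝ) + 1) * (u 1 - u 0) := by
    intro j
    induction j with
    | zero => constructor <;> push_cast <;> ring
    | succ j ih =>
        refine ⟨by rw [ih.2]; push_cast; ring, ?_⟩
        rw [hrec j, ih.1, ih.2]
        push_cast; ring
  exact fun j => (key j).1

/-- Invariant of a two-term recurrence. -/
lemma rec_invariant (u : ℕ → ℝ) (t : ℝ) (hrec : ∀ j, u (j + 2) = t * u (j + 1) - u j) :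
    ∀ j, u (j + 1) ^ 2 - t * u (j + 1) * u j + u j ^ 2
        = u 1 ^ 2 - t * u 1 * u 0 + u 0 ^ 2 := by
  intro j
  induction j with
  | zero => rfl
  | succ j ih =>
      rw [← ih, hrec j]
      ring

lemma ratio_tendsto (α β γ : ℝ) (hγ : γ ≠ 0) :
    Tendsto (fun j : ℕ => (α + (j : ℝ) * β) / ((j : ℝ) * γ)) atTop (nhds (β / γ)) := by
  have h1 : Tendsto (fun j : ℕ => α / (j : ℝ)) atTop (nhds 0) :=
    tendsto_const_div_atTop_nhds_zero_nat α
  have h2 : Tendsto (fun j : ℕ => (α / (j : ℝ) + β) / γ) atTop (nhds ((0 + β) / γ)) :=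
    (h1.add tendsto_const_nhds).div_const γ
  rw [zero_add] at h2
  apply h2.congr'
  filter_upwards [eventually_ge_atTop 1] with j hj
  have hj0 : (j : ℝ) ≠ 0 := by positivity
  field_simp

/-- Parabolic case: slopes must vanish. -/
lemma parab_slope (u v : ℕ → ℝ)
    (hu : ∀ j, u (j + 2) = 2 * u (j + 1) - u j)
    (hv : ∀ j, v (j + 2) = 2 * v (j + 1) - v j)
    (hv0 : v 0 = 0) (hv1 : v 1 ≠ 0)
    (h0 : Tendsto (fun j => u j / v j) atTop (nhds 0)) : u 1 = u 0 := by
  have hcu := rec_arith u hu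
  have hcv := rec_arith v hv
  have hrt : Tendsto (fun j : ℕ => (u 0 + (j : ℝ) * (u 1 - u 0)) / ((j : ℝ) * v 1)) atTop
      (nhds ((u 1 - u 0) / v 1)) := ratio_tendsto (u 0) (u 1 - u 0) (v 1) hv1
  have heq : (fun j : ℕ => (u 0 + (j : ℝ) * (u 1 - u 0)) / ((j : ℝ) * v 1))
      = fun j => u j / v j := by
    funext j
    rw [hcu j, hcv j, hv0]
    ring_nf
  rw [heq] at hrt
  have := tendsto_nhds_unique hrt h0
  have h2 : u 1 - u 0 = 0 := by
    field_simp at this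
    linarith
  linarith

/-- Elliptic case: impossible. -/
lemma ellip_false (u v : ℕ → ℝ) (t : ℝ)
    (hu : ∀ j, u (j + 2) = t * u (j + 1) - u j)
    (hv : ∀ j, v (j + 2) = t * v (j + 1) - v j)
    (hlt : |t| < 2) (hu0 : u 0 ≠ 0)
    (hvne : ∀ᶠ j in atTop, v j ≠ 0)
    (h0 : Tendsto (fun j => u j / v j) atTop (nhds 0)) : False := by
  have hIu := rec_invariant u t hu
  have hIv := rec_invariant v t hv
  set Iv := v 1 ^ 2 - t * v 1 * v 0 + v 0 ^ 2 with hIvdef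
  have habs := abs_nonneg t
  have hta : t ≤ |t| := le_abs_self t
  have hta' : -|t| ≤ t := neg_abs_le t
  have hsqt : |t| ^ 2 = t ^ 2 := sq_abs t
  have ht4 : t ^ 2 < 4 := by nlinarith
  have hIvnn : 0 ≤ Iv := by
    rw [hIvdef]
    nlinarith [sq_nonneg (2 * v 1 - t * v 0), sq_nonneg (v 0)]
  have hvbound : ∀ j, v j ^ 2 ≤ 2 * Iv / (2 - |t|) := by
    intro j
    rw [le_div_iff₀ (by linarith)]
    have hj := hIv j
    nlinarith [sq_nonneg (2 * v (j + 1) - t * v j), sq_nonneg (v j), ht4]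
  set CD := Real.sqrt (2 * Iv / (2 - |t|)) with hCDdef
  have hvb2 : ∀ j, |v j| ≤ CD := by
    intro j
    exact Real.abs_le_sqrt (hvbound j)
  have hCDnn : 0 ≤ CD := Real.sqrt_nonneg _
  have hu0' : Tendsto u atTop (nhds 0) := by
    apply squeeze_zero_norm' (a := fun j => |u j / v j| * CD)
    · filter_upwards [hvne] with j hj
      calc ‖u j‖ = |u j / v j| * |v j| := by
            rw [Real.norm_eq_abs, ← abs_mul, div_mul_cancel₀ _ hj]
      _ ≤ |u j / v j| * CD := mul_le_mul_of_nonneg_left (hvb2 j) (abs_nonneg _)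
    · have h1 : Tendsto (fun j => |u j / v j|) atTop (nhds 0) := by
        simpa using h0.abs
      simpa using h1.mul_const CD
  have hu1' : Tendsto (fun j => u (j + 1)) atTop (nhds 0) := by
    rw [Filter.tendsto_add_atTop_iff_nat 1]
    exact hu0'
  have hS : Tendsto (fun j => u (j + 1) ^ 2 - t * u (j + 1) * u j + u j ^ 2) atTop
      (nhds (0 ^ 2 - t * 0 * 0 + 0 ^ 2)) := by
    exact ((hu1'.pow 2).sub (((tendsto_const_nhds (x := t)).mul hu1').mul hu0')).add
      (hu0'.pow 2)
  norm_num at hS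
  have hc : Tendsto (fun _ : ℕ => u 1 ^ 2 - t * u 1 * u 0 + u 0 ^ 2) atTop (nhds 0) :=
    hS.congr hIu
  have hI0 : u 1 ^ 2 - t * u 1 * u 0 + u 0 ^ 2 = 0 := tendsto_nhds_unique tendsto_const_nhds hc
  have hu02 : 0 < u 0 ^ 2 := by positivity
  nlinarith [sq_nonneg (2 * u 1 - t * u 0)]

/-- Hyperbolic case: the coefficient of the expanding root must vanish. -/
lemma coeff_zero (u v : ℕ → ℝ) (t lam : ℝ)
    (hu : ∀ j, u (j + 2) = t * u (j + 1) - u j)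
    (hv : ∀ j, v (j + 2) = t * v (j + 1) - v j)
    (hchar : lam ^ 2 - t * lam + 1 = 0) (habs : 1 < |lam|)
    (hvne : ∀ᶠ j in atTop, v j ≠ 0)
    (h0 : Tendsto (fun j => u j / v j) atTop (nhds 0)) :
    u 1 = (t - lam) * u 0 := by
  have hsq : |lam| ^ 2 = lam ^ 2 := sq_abs lam
  have hd : 2 * lam - t ≠ 0 := by
    intro h
    have h1 : lam ^ 2 = 1 := by linear_combination -hchar + lam * h
    nlinarith
  have hlm : lam * (t - lam) = 1 := by linear_combination -hchar
  have hmuabs : |t - lam| < 1 := by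
    have h1 : |lam| * |t - lam| = 1 := by rw [← abs_mul, hlm, abs_one]
    nlinarith [abs_nonneg (t - lam)]
  suffices hA : (u 1 - (t - lam) * u 0) / (2 * lam - t) = 0 by
    rcases div_eq_zero_iff.mp hA with h | h
    · linarith
    · exact absurd h hd
  set A := (u 1 - (t - lam) * u 0) / (2 * lam - t) with hAdef
  set B := (lam * u 0 - u 1) / (2 * lam - t) with hBdef
  set AD := (v 1 - (t - lam) * v 0) / (2 * lam - t) with hADdef
  set BD := (lam * v 0 - v 1) / (2 * lam - t) with hBDdef
  have hcfu : ∀ j, u j = A * lam ^ j + B * (t - lam) ^ j := by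
    refine rec_closed_form u t lam A B hu hchar ?_ ?_
    · rw [hAdef, hBdef, ← add_div, eq_div_iff hd]; ring
    · rw [hAdef, hBdef, div_mul_eq_mul_div, div_mul_eq_mul_div, ← add_div, eq_div_iff hd]; ring
  have hcfv : ∀ j, v j = AD * lam ^ j + BD * (t - lam) ^ j := by
    refine rec_closed_form v t lam AD BD hv hchar ?_ ?_
    · rw [hADdef, hBDdef, ← add_div, eq_div_iff hd]; ring
    · rw [hADdef, hBDdef, div_mul_eq_mul_div, div_mul_eq_mul_div, ← add_div, eq_div_iff hd]; ring
  by_contra hA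
  have hApos : 0 < |A| := abs_pos.mpr hA
  set C := |AD| + |BD| with hCdef
  have hC0 : 0 < C := by
    rcases lt_or_ge 0 C with h | h
    · exact h
    · exfalso
      have hAD : AD = 0 := by
        have := abs_nonneg AD; have := abs_nonneg BD
        have : |AD| = 0 := by simp only [hCdef] at h; linarith
        exact abs_eq_zero.mp this
      have hBD : BD = 0 := by
        have := abs_nonneg AD; have := abs_nonneg BD
        have : |BD| = 0 := by simp only [hCdef] at h; linarith
        exact abs_eq_zero.mp this
      obtain ⟨j, hj⟩ := hvne.exists
      apply hj
      rw [hcfv j, hAD, hBD]; ring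
  have hlamj : Tendsto (fun j : ℕ => |lam| ^ j) atTop atTop :=
    tendsto_pow_atTop_atTop_of_one_lt habs
  have hev1 : ∀ᶠ j in atTop, 2 * |B| / |A| ≤ |lam| ^ j :=
    hlamj.eventually_ge_atTop _
  have hev2 : ∀ᶠ j in atTop, ‖u j / v j‖ < |A| / (2 * C) :=
    NormedAddCommGroup.tendsto_nhds_zero.mp h0 _ (by positivity)
  obtain ⟨j, h1, h23⟩ := (hev1.and (hev2.and hvne)).exists
  obtain ⟨h2, h3⟩ := h23
  have hlam1 : (1:ℝ) ≤ |lam| ^ j := one_le_pow₀ habs.le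
  have hmuj : |t - lam| ^ j ≤ 1 := pow_le_one₀ (abs_nonneg _) hmuabs.le
  have hub : |v j| ≤ C * |lam| ^ j := by
    rw [hcfv j]
    calc |AD * lam ^ j + BD * (t - lam) ^ j| ≤ |AD * lam ^ j| + |BD * (t - lam) ^ j| :=
          abs_add_le _ _
    _ = |AD| * |lam| ^ j + |BD| * |t - lam| ^ j := by rw [abs_mul, abs_mul, abs_pow, abs_pow]
    _ ≤ |AD| * |lam| ^ j + |BD| * |lam| ^ j := by
        have := abs_nonneg BD
        have h5 : |t - lam| ^ j ≤ |lam| ^ j := le_trans hmuj hlam1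
        nlinarith
    _ = C * |lam| ^ j := by rw [hCdef]; ring
  have hBle : |B| ≤ |A| / 2 * |lam| ^ j := by
    rw [div_le_iff₀ hApos] at h1
    nlinarith
  have hlb : |A| / 2 * |lam| ^ j ≤ |u j| := by
    have h4 : |A * lam ^ j| - |-(B * (t - lam) ^ j)| ≤ |A * lam ^ j - -(B * (t - lam) ^ j)| :=
      abs_sub_abs_le_abs_sub _ _
    rw [abs_neg, sub_neg_eq_add, abs_mul, abs_mul, abs_pow, abs_pow] at h4
    rw [hcfu j]
    have h5 : |B| * |t - lam| ^ j ≤ |A| / 2 * |lam| ^ j := by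
      have := abs_nonneg B
      nlinarith
    nlinarith
  have hvjpos : 0 < |v j| := abs_pos.mpr h3
  have hfinal : |A| / (2 * C) ≤ |u j| / |v j| := by
    rw [div_le_div_iff₀ (by positivity) hvjpos]
    nlinarith [mul_le_mul_of_nonneg_left hub (abs_nonneg A),
      mul_le_mul_of_nonneg_left hlb (by positivity : (0:ℝ) ≤ 2 * C)]
  rw [Real.norm_eq_abs, abs_div] at h2
  linarith

/-- Parabolic case with `t = -2`. -/
lemma parab_slope_neg (u v : ℕ → ℝ)
    (hu : ∀ j, u (j + 2) = -2 * u (j + 1) - u j)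
    (hv : ∀ j, v (j + 2) = -2 * v (j + 1) - v j)
    (hv0 : v 0 = 0) (hv1 : v 1 ≠ 0)
    (h0 : Tendsto (fun j => u j / v j) atTop (nhds 0)) : -u 1 = u 0 := by
  have key := parab_slope (fun j => (-1) ^ j * u j) (fun j => (-1) ^ j * v j) ?_ ?_ ?_ ?_ ?_
  · simpa using key
  · intro j
    show (-1:ℝ) ^ (j+2) * u (j+2) = 2 * ((-1:ℝ) ^ (j+1) * u (j+1)) - (-1:ℝ) ^ j * u j
    rw [hu j, pow_add, pow_succ]
    ring
  · intro j
    show (-1:ℝ) ^ (j+2) * v (j+2) = 2 * ((-1:ℝ) ^ (j+1) * v (j+1)) - (-1:ℝ) ^ j * v j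
    rw [hv j, pow_add, pow_succ]
    ring
  · simpa using hv0
  · simpa using hv1
  · apply h0.congr
    intro j
    have hne : ((-1:ℝ)) ^ j ≠ 0 := by positivity
    rw [mul_div_mul_left _ _ hne]

end Aux2

section Main

open Filter

set_option maxHeartbeats 1000000 in
theorem stmt3 (n : ℕ) (hn : 1 ≤ n) (a₀ a₁ a₂ : ℝ)
    (ha₀ : a₀ ∈ Algebra.adjoin ℤ ({X (n - 1)} : Set ℝ))
    (ha₁ : a₁ ∈ Algebra.adjoin ℤ ({X (n - 1)} : Set ℝ))
    (ha₂ : a₂ ∈ Algebra.adjoin ℤ ({X (n - 1)} : Set ℝ))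
    (c : ℕ → ℝ) (hc0 : c 0 = a₀)
    (hcodd : ∀ k, c (2 * k + 1) = a₁) (hceven : ∀ k, c (2 * k + 2) = a₂)
    (hconv : CFConv c (X n)) :
    a₂ = 2 * a₀ ∧ (a₀ * a₁ + 1) ^ 2 - X n ^ 2 * a₁ ^ 2 = 1 ∧ (a₀ * a₁ + 1) * a₁ > 0 := by
  classical
  set x := X n with hxdef
  have hx2 : x ^ 2 = 2 + X (n - 1) := by
    have h := X_sq (n - 1)
    rwa [show n - 1 + 1 = n from by omega] at h
  have hxpos : 0 < x := X_pos n hn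
  have hx0 : x ≠ 0 := ne_of_gt hxpos
  set N := cfNum c with hN
  set D := cfDen c with hD
  have hNstep : ∀ k, N (k + 2) = c (k + 1) * N (k + 1) + N k := by
    intro k; rw [hN]; rw [cfNum]
  have hDstep : ∀ k, D (k + 2) = c (k + 1) * D (k + 1) + D k := by
    intro k; rw [hD]; rw [cfDen]
  have hN0 : N 0 = 1 := rfl
  have hN1 : N 1 = a₀ := hc0
  have hD0 : D 0 = 0 := rfl
  have hD1 : D 1 = 1 := rfl
  have hc1 : c 1 = a₁ := by have := hcodd 0; norm_num at this; exact this
  have hc2 : c 2 = a₂ := by have := hceven 0; norm_num at this; exact this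
  have hN2 : N 2 = a₁ * a₀ + 1 := by rw [hNstep 0, hc1, hN1, hN0]
  have hD2 : D 2 = a₁ := by rw [hDstep 0, hc1, hD1, hD0]; ring
  have hN3 : N 3 = a₂ * (a₁ * a₀ + 1) + a₀ := by rw [hNstep 1, hc2, hN2, hN1]
  have hD3 : D 3 = a₂ * a₁ + 1 := by rw [hDstep 1, hc2, hD2, hD1]
  have hcper : ∀ m, c (m + 3) = c (m + 1) := by
    intro m
    rcases Nat.even_or_odd m with ⟨k, rfl⟩ | ⟨k, rfl⟩
    · rw [show k + k + 3 = 2 * (k + 1) + 1 from by ring, hcodd,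
        show k + k + 1 = 2 * k + 1 from by ring, hcodd]
    · rw [show 2 * k + 1 + 3 = 2 * (k + 1) + 2 from by ring, hceven,
        show 2 * k + 1 + 1 = 2 * k + 2 from by ring, hceven]
  have hcprod : ∀ m, c (m + 1) * c (m + 2) = a₁ * a₂ := by
    intro m
    rcases Nat.even_or_odd m with ⟨k, rfl⟩ | ⟨k, rfl⟩
    · rw [show k + k + 1 = 2 * k + 1 from by ring, hcodd,
        show k + k + 2 = 2 * k + 2 from by ring, hceven]
    · rw [show 2 * k + 1 + 1 = 2 * k + 2 from by ring, hceven,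
        show 2 * k + 1 + 2 = 2 * (k + 1) + 1 from by ring, hcodd]
      ring
  set t := a₁ * a₂ + 2 with htdef
  have hNrec : ∀ m, N (m + 4) = t * N (m + 2) - N m := by
    intro m
    have h1 : N (m + 4) = c (m + 3) * N (m + 3) + N (m + 2) := hNstep (m + 2)
    rw [hcper m, hNstep (m + 1)] at h1
    have h3 : c (m + 1) * N (m + 1) = N (m + 2) - N m := by rw [hNstep m]; ring
    rw [h1, htdef]
    linear_combination N (m + 2) * hcprod m + h3
  have hDrec : ∀ m, D (m + 4) = t * D (m + 2) - D m := by
    intro m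
    have h1 : D (m + 4) = c (m + 3) * D (m + 3) + D (m + 2) := hDstep (m + 2)
    rw [hcper m, hDstep (m + 1)] at h1
    have h3 : c (m + 1) * D (m + 1) = D (m + 2) - D m := by rw [hDstep m]; ring
    rw [h1, htdef]
    linear_combination D (m + 2) * hcprod m + h3
  set E := fun m => N m - x * D m with hEdef
  have hErec : ∀ m, E (m + 4) = t * E (m + 2) - E m := by
    intro m
    simp only [hEdef]
    linear_combination hNrec m - x * hDrec m
  have hE0v : E 0 = 1 := by simp [hEdef, hN0, hD0]
  have hconv' : Tendsto (fun k => N (k + 1) / D (k + 1)) atTop (nhds x) := hconv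
  have hfne := hconv'.eventually_ne hx0
  have hDne : ∀ᶠ k in atTop, D (k + 1) ≠ 0 := by
    filter_upwards [hfne] with k hk
    intro h0
    rw [h0, div_zero] at hk
    exact hk rfl
  have ha1ne : a₁ ≠ 0 := by
    intro h0
    have hDeven : ∀ j, D (2 * j) = 0 := by
      intro j
      induction j with
      | zero => exact hD0
      | succ j ih =>
          have h1 : D (2 * (j + 1)) = c (2 * j + 1) * D (2 * j + 1) + D (2 * j) := by
            rw [show 2 * (j + 1) = 2 * j + 2 from by ring]
            exact hDstep (2 * j)
          rw [h1, hcodd j, h0, ih]; ring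
    obtain ⟨k₀, hk₀⟩ := Filter.eventually_atTop.mp hDne
    apply hk₀ (2 * k₀ + 1) (by omega)
    rw [show 2 * k₀ + 1 + 1 = 2 * (k₀ + 1) from by ring]
    exact hDeven (k₀ + 1)
  have hE0 : Tendsto (fun m => E m / D m) atTop (nhds 0) := by
    rw [← Filter.tendsto_add_atTop_iff_nat 1]
    have hsub : Tendsto (fun k => N (k + 1) / D (k + 1) - x) atTop (nhds 0) := by
      simpa using hconv'.sub_const x
    apply hsub.congr'
    filter_upwards [hDne] with k hk
    simp only [hEdef]
    field_simp
  have hDne' : ∀ᶠ m in atTop, D m ≠ 0 := by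
    obtain ⟨k₀, hk₀⟩ := Filter.eventually_atTop.mp hDne
    refine Filter.eventually_atTop.mpr ⟨k₀ + 1, fun m hm => ?_⟩
    have h1 := hk₀ (m - 1) (by omega)
    rwa [Nat.sub_add_cancel (by omega)] at h1
  have hpar : ∀ p : ℕ, Tendsto (fun j : ℕ => 2 * j + p) atTop atTop := fun p =>
    Filter.tendsto_atTop_atTop.mpr fun b => ⟨b, fun a ha => by omega⟩
  have hE0p : ∀ p, Tendsto (fun j : ℕ => E (2 * j + p) / D (2 * j + p)) atTop (nhds 0) :=
    fun p => hE0.comp (hpar p)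
  have hDnep : ∀ p, ∀ᶠ j in atTop, D (2 * j + p) ≠ 0 := fun p => (hpar p).eventually hDne'
  have hErecp : ∀ p j, E (2 * (j + 2) + p) = t * E (2 * (j + 1) + p) - E (2 * j + p) := by
    intro p j
    rw [show 2 * (j + 2) + p = 2 * j + p + 4 from by ring,
      show 2 * (j + 1) + p = 2 * j + p + 2 from by ring]
    exact hErec (2 * j + p)
  have hDrecp : ∀ p j, D (2 * (j + 2) + p) = t * D (2 * (j + 1) + p) - D (2 * j + p) := by
    intro p j
    rw [show 2 * (j + 2) + p = 2 * j + p + 4 from by ring,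
      show 2 * (j + 1) + p = 2 * j + p + 2 from by ring]
    exact hDrec (2 * j + p)
  have hθmem : X (n - 1) ∈ Algebra.adjoin ℤ ({X (n - 1)} : Set ℝ) :=
    Algebra.subset_adjoin (Set.mem_singleton _)
  have h2mem : (2 : ℝ) ∈ Algebra.adjoin ℤ ({X (n - 1)} : Set ℝ) := by
    have h := Subalgebra.intCast_mem (Algebra.adjoin ℤ ({X (n - 1)} : Set ℝ)) 2
    rwa [show ((2 : ℤ) : ℝ) = 2 from by norm_num] at h
  -- the key dichotomy
  have key : E 3 = E 2 * E 1 ∧ |E 2| < 1 := by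
    rcases lt_trichotomy (|t|) 2 with hlt | heq | hgt
    · exact absurd (ellip_false (fun j => E (2 * j + 0)) (fun j => D (2 * j + 0)) t
        (hErecp 0) (hDrecp 0) hlt (by norm_num [hE0v]) (hDnep 0) (hE0p 0)) (by simp)
    · exfalso
      rcases (abs_eq (by norm_num : (0:ℝ) ≤ 2)).mp heq with ht2 | ht2
      · have hres := parab_slope (fun j => E (2 * j + 0)) (fun j => D (2 * j + 0))
          (fun j => by rw [← ht2]; exact hErecp 0 j)
          (fun j => by rw [← ht2]; exact hDrecp 0 j)
          (by norm_num [hD0]) (by norm_num [hD2]; exact ha1ne) (hE0p 0)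
        norm_num [hE0v] at hres
        -- hres : E 2 = 1
        have hbx : a₁ * x = a₁ * a₀ := by
          have h := hres
          rw [show (2:ℕ) = 0 + 2 from rfl] at h
          simp only [hEdef] at h
          rw [hN2, hD2] at h
          linarith
        exact ha1ne (Hirr n hn a₁ (a₁ * a₀) ha₁ (mul_mem ha₁ ha₀) hbx)
      · have hres := parab_slope_neg (fun j => E (2 * j + 0)) (fun j => D (2 * j + 0))
          (fun j => by rw [← ht2]; exact hErecp 0 j)
          (fun j => by rw [← ht2]; exact hDrecp 0 j)
          (by norm_num [hD0]) (by norm_num [hD2]; exact ha1ne) (hE0p 0)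
        norm_num [hE0v] at hres
        -- hres : -E 2 = 1
        have hbx : a₁ * x = a₁ * a₀ + 2 := by
          have h := hres
          rw [show (2:ℕ) = 0 + 2 from rfl] at h
          simp only [hEdef] at h
          rw [hN2, hD2] at h
          linarith
        exact ha1ne (Hirr n hn a₁ (a₁ * a₀ + 2) ha₁ (add_mem (mul_mem ha₁ ha₀) h2mem) hbx)
    · obtain ⟨lam, hchar, habsl⟩ : ∃ lam : ℝ, lam ^ 2 - t * lam + 1 = 0 ∧ 1 < |lam| := by
        have ht4 : 0 ≤ t ^ 2 - 4 := by nlinarith [sq_abs t, abs_nonneg t]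
        have hd2 : Real.sqrt (t ^ 2 - 4) ^ 2 = t ^ 2 - 4 := Real.sq_sqrt ht4
        have hd0 : 0 ≤ Real.sqrt (t ^ 2 - 4) := Real.sqrt_nonneg _
        rcases lt_abs.mp hgt with h | h
        · refine ⟨(t + Real.sqrt (t ^ 2 - 4)) / 2, by linear_combination hd2 / 4, ?_⟩
          rw [abs_of_pos (by linarith)]
          linarith
        · refine ⟨(t - Real.sqrt (t ^ 2 - 4)) / 2, by linear_combination hd2 / 4, ?_⟩
          rw [abs_of_neg (by linarith)]
          linarith
      have hlm : lam * (t - lam) = 1 := by linear_combination -hchar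
      have hmuabs : |t - lam| < 1 := by
        have h1 : |lam| * |t - lam| = 1 := by rw [← abs_mul, hlm, abs_one]
        nlinarith [abs_nonneg (t - lam)]
      have h20 := coeff_zero (fun j => E (2 * j + 0)) (fun j => D (2 * j + 0)) t lam
        (hErecp 0) (hDrecp 0) hchar habsl (hDnep 0) (hE0p 0)
      have h21 := coeff_zero (fun j => E (2 * j + 1)) (fun j => D (2 * j + 1)) t lam
        (hErecp 1) (hDrecp 1) hchar habsl (hDnep 1) (hE0p 1)
      norm_num [hE0v] at h20 h21
      -- h20 : E 2 = t - lam, h21 : E 3 = (t - lam) * E 1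
      refine ⟨by rw [h21, h20], by rw [h20]; exact hmuabs⟩
  obtain ⟨hkeyE, hkeyAbs⟩ := key
  have hE1v : E 1 = a₀ - x := by simp [hEdef, hN1, hD1]
  have hE2v : E 2 = a₁ * a₀ + 1 - x * a₁ := by
    show N 2 - x * D 2 = _
    rw [hN2, hD2]
  have hE3v : E 3 = a₂ * (a₁ * a₀ + 1) + a₀ - x * (a₂ * a₁ + 1) := by
    show N 3 - x * D 3 = _
    rw [hN3, hD3]
  have hbx : (a₁ * (2 * a₀ - a₂)) * x
      = a₀ ^ 2 * a₁ + a₁ * (2 + X (n - 1)) - a₀ * a₁ * a₂ - a₂ := by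
    rw [hE1v, hE2v, hE3v] at hkeyE
    linear_combination hkeyE + a₁ * hx2
  have hb := Hirr n hn _ _
    (mul_mem ha₁ (sub_mem (mul_mem h2mem ha₀) ha₂))
    (sub_mem (sub_mem (add_mem (mul_mem (pow_mem ha₀ 2) ha₁)
      (mul_mem ha₁ (add_mem h2mem hθmem))) (mul_mem (mul_mem ha₀ ha₁) ha₂)) ha₂)
    hbx
  have ha₂eq : a₂ = 2 * a₀ := by
    rcases mul_eq_zero.mp hb with h | h
    · exact absurd h ha1ne
    · linarith
  have hcc : a₀ ^ 2 * a₁ + a₁ * (2 + X (n - 1)) - a₀ * a₁ * a₂ - a₂ = 0 := by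
    rw [← hbx, hb, zero_mul]
  have hkey2 : a₁ * x ^ 2 = a₀ ^ 2 * a₁ + 2 * a₀ := by
    rw [hx2]
    rw [ha₂eq] at hcc
    linear_combination hcc
  have hPyth : (a₀ * a₁ + 1) ^ 2 - x ^ 2 * a₁ ^ 2 = 1 := by
    linear_combination (-a₁) * hkey2
  refine ⟨ha₂eq, hPyth, ?_⟩
  -- positivity
  have habs2 : (a₀ * a₁ + 1 - x * a₁) ^ 2 < 1 := by
    rw [hE2v] at hkeyAbs
    have h := (sq_lt_one_iff_abs_lt_one (a := a₁ * a₀ + 1 - x * a₁)).mpr hkeyAbs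
    calc (a₀ * a₁ + 1 - x * a₁) ^ 2 = (a₁ * a₀ + 1 - x * a₁) ^ 2 := by ring
    _ < 1 := h
  have hprod : (a₀ * a₁ + 1 - x * a₁) * (a₀ * a₁ + 1 + x * a₁) = 1 := by
    linear_combination hPyth
  have hsq1 : ((a₀ * a₁ + 1 - x * a₁) * (a₀ * a₁ + 1 + x * a₁)) ^ 2 = 1 := by
    rw [hprod]; norm_num
  have hgt1 : 1 < (a₀ * a₁ + 1 + x * a₁) ^ 2 := by
    nlinarith [sq_nonneg (a₀ * a₁ + 1 + x * a₁), sq_nonneg (a₀ * a₁ + 1 - x * a₁)]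
  have hiden : 4 * ((a₀ * a₁ + 1) * a₁) * x
      = (a₀ * a₁ + 1 + x * a₁) ^ 2 - (a₀ * a₁ + 1 - x * a₁) ^ 2 := by ring
  have h4 : 0 < 4 * ((a₀ * a₁ + 1) * a₁) * x := by rw [hiden]; linarith [hgt1, habs2]
  by_contra hcon
  push_neg at hcon
  nlinarith [h4, hxpos]

end Main
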